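/- Let k ≥ 1, let T be a finite subset of ℤ^k, let a : ℤ^k → ℂ, and define g : ℝ^k → ℂ by g(θ) = ∑_{t ∈ T} a(t) · ∏_{j=1}^k exp(−i · t_j · θ_j / 2). Suppose λ_1, …, λ_k are natural numbers such that |t_j| ≤ λ_j for every t ∈ T and every j ∈ {1,…,k}. Let S_1, …, S_k be finite subsets of the interval [0, 4π) with |S_j| > 2·λ_j for each j. If g(v) = 0 for every v ∈ S_1 × S_2 × ⋯ × S_k, then g(θ) = 0 for every θ ∈ ℝ^k. -/

import Mathlib

open Complex Real

open MvPolynomial in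
lemma mv_grid_zero : ∀ (n : ℕ) (F : MvPolynomial (Fin n) ℂ) (W : Fin n → Finset ℂ),
    (∀ j, F.degreeOf j < (W j).card) →
    (∀ w : Fin n → ℂ, (∀ j, w j ∈ W j) → MvPolynomial.eval w F = 0) → F = 0 := by
  intro n
  induction n with
  | zero =>
    intro F W _ hv
    have := hv (fun j => j.elim0) (fun j => j.elim0)
    rw [MvPolynomial.eq_C_of_isEmpty F]
    rw [MvPolynomial.eq_C_of_isEmpty F, eval_C] at this
    simp [this]
  | succ n ih =>
    intro F W hdeg hv
    set q := finSuccEquiv ℂ n F with hq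
    have hcoeff : ∀ i, q.coeff i = 0 := by
      intro i
      apply ih _ (fun j => W j.succ)
      · intro j
        exact lt_of_le_of_lt (degreeOf_coeff_finSuccEquiv F j i) (hdeg j.succ)
      · intro w hw
        have key : Polynomial.map (MvPolynomial.eval w) q = 0 := by
          apply Polynomial.eq_zero_of_natDegree_lt_card_of_eval_eq_zero' _ (W 0)
          · intro y hy
            rw [← MvPolynomial.eval_eq_eval_mv_eval']
            apply hv
            intro j
            refine Fin.cases ?_ ?_ j
            · simpa using hy
            · intro j'; simpa using hw j'
          · calc (Polynomial.map (MvPolynomial.eval w) q).natDegree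
                ≤ q.natDegree := Polynomial.natDegree_map_le
              _ = F.degreeOf 0 := natDegree_finSuccEquiv F
              _ < (W 0).card := hdeg 0
        have := congrArg (fun p => Polynomial.coeff p i) key
        simpa [Polynomial.coeff_map] using this
    have : q = 0 := Polynomial.ext fun i => by simp [hcoeff i]
    have := (finSuccEquiv ℂ n).injective (by simpa [hq] using this)
    simpa using this

/-- **Cutoff theorem for exponential sums.**
If `g(θ) = ∑_{t ∈ T} a t · ∏_j exp(−i t_j θ_j / 2)` with frequency bounds `|t_j| ≤ λ_j`,
and `g` vanishes on a grid `S₁ × ⋯ × S_k` of angles in `[0, 4π)` with `|S_j| > 2 λ_j`,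
then `g` vanishes everywhere. -/
theorem exponential_sum_cutoff
    (k : ℕ) (hk : 1 ≤ k)
    (T : Finset (Fin k → ℤ)) (a : (Fin k → ℤ) → ℂ)
    (g : (Fin k → ℝ) → ℂ)
    (hg : ∀ θ : Fin k → ℝ,
      g θ = ∑ t ∈ T, a t * ∏ j : Fin k, Complex.exp (-Complex.I * (t j : ℂ) * (θ j : ℂ) / 2))
    (lam : Fin k → ℕ)
    (hbound : ∀ t ∈ T, ∀ j : Fin k, |t j| ≤ (lam j : ℤ))
    (S : Fin k → Finset ℝ)
    (hS : ∀ j : Fin k, ∀ s ∈ S j, 0 ≤ s ∧ s < 4 * Real.pi)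
    (hcard : ∀ j : Fin k, 2 * lam j < (S j).card)
    (hzero : ∀ v : Fin k → ℝ, (∀ j : Fin k, v j ∈ S j) → g v = 0) :
    ∀ θ : Fin k → ℝ, g θ = 0 := by
  classical
  set w : ℝ → ℂ := fun s => Complex.exp (-Complex.I * (s : ℂ) / 2) with hw
  set e : (Fin k → ℤ) → (Fin k →₀ ℕ) :=
    fun t => Finsupp.equivFunOnFinite.symm (fun j => (t j + lam j).toNat) with he
  set F : MvPolynomial (Fin k) ℂ :=
    ∑ t ∈ T, MvPolynomial.monomial (e t) (a t) with hF
  -- evaluation identity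
  have heval : ∀ θ : Fin k → ℝ,
      MvPolynomial.eval (fun j => w (θ j)) F
        = (∏ j : Fin k, Complex.exp (-Complex.I * (lam j : ℂ) * (θ j : ℂ) / 2)) * g θ := by
    intro θ
    rw [hF, map_sum, hg θ, Finset.mul_sum]
    apply Finset.sum_congr rfl
    intro t ht
    rw [MvPolynomial.eval_monomial]
    rw [Finsupp.prod_fintype _ _ (fun j => pow_zero _)]
    have hterm : ∀ j : Fin k, (w (θ j)) ^ ((e t) j)
        = Complex.exp (-Complex.I * (t j : ℂ) * (θ j : ℂ) / 2)
          * Complex.exp (-Complex.I * (lam j : ℂ) * (θ j : ℂ) / 2) := by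
      intro j
      have h1 : ((e t) j : ℂ) = (t j : ℂ) + (lam j : ℂ) := by
        have h0 : (0:ℤ) ≤ t j + lam j := by
          have := (abs_le.mp (hbound t ht j)).1; omega
        simp only [he, Finsupp.coe_equivFunOnFinite_symm]
        exact_mod_cast congrArg (fun z : ℤ => (z : ℂ)) (Int.toNat_of_nonneg h0)
      rw [hw]
      rw [← Complex.exp_nat_mul, ← Complex.exp_add]
      congr 1
      have : ((e t j : ℕ) : ℂ) = (t j : ℂ) + (lam j : ℂ) := h1
      rw [this]
      ring
    simp_rw [hterm]
    rw [Finset.prod_mul_distrib]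
    ring
  have hprodne : ∀ θ : Fin k → ℝ,
      (∏ j : Fin k, Complex.exp (-Complex.I * (lam j : ℂ) * (θ j : ℂ) / 2)) ≠ 0 :=
    fun θ => Finset.prod_ne_zero_iff.mpr fun j _ => Complex.exp_ne_zero _
  -- grids in ℂ
  set W : Fin k → Finset ℂ := fun j => (S j).image w with hW
  have hinj : ∀ j : Fin k, Set.InjOn w (S j) := by
    intro j s hs s' hs' h
    rw [hw] at h
    rw [Complex.exp_eq_exp_iff_exists_int] at h
    obtain ⟨n, hn⟩ := h
    have him := congrArg Complex.im hn
    simp [Complex.div_im, Complex.add_im, Complex.mul_im, Complex.mul_re] at him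
    obtain ⟨h1, h2⟩ := hS j s hs
    obtain ⟨h3, h4⟩ := hS j s' hs'
    have hπ := Real.pi_pos
    have hn1 : (-1 : ℝ) < (n : ℝ) := by nlinarith
    have hn2 : ((n : ℝ)) < 1 := by nlinarith
    have : n = 0 := by
      have a1 : (-1 : ℤ) < n := by exact_mod_cast hn1
      have a2 : n < (1 : ℤ) := by exact_mod_cast hn2
      omega
    rw [this] at him
    simp at him
    linarith
  have hWcard : ∀ j : Fin k, (W j).card = (S j).card := fun j =>
    Finset.card_image_of_injOn (hinj j)
  -- degree bound
  have hdeg : ∀ j : Fin k, F.degreeOf j < (W j).card := by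
    intro j
    have h1 : F.degreeOf j < 2 * lam j + 1 := by
      rw [MvPolynomial.degreeOf_lt_iff (Nat.succ_pos _)]
      intro m hm
      rw [MvPolynomial.mem_support_iff, hF, MvPolynomial.coeff_sum] at hm
      obtain ⟨t, ht, hne⟩ := Finset.exists_ne_zero_of_sum_ne_zero hm
      rw [MvPolynomial.coeff_monomial] at hne
      have hme : e t = m := by by_contra hcon; simp [hcon] at hne
      have hb := abs_le.mp (hbound t ht j)
      have : m j = (t j + lam j).toNat := by
        rw [← hme]; simp [he]
      omega
    calc F.degreeOf j < 2 * lam j + 1 := h1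
      _ ≤ (S j).card := hcard j
      _ = (W j).card := (hWcard j).symm
  -- vanishing on grid
  have hvan : ∀ w' : Fin k → ℂ, (∀ j, w' j ∈ W j) → MvPolynomial.eval w' F = 0 := by
    intro w' hw'
    have : ∀ j : Fin k, ∃ s ∈ S j, w s = w' j := by
      intro j; exact Finset.mem_image.mp (hw' j)
    choose v hv hveq using this
    have hww' : w' = fun j => w (v j) := funext fun j => (hveq j).symm
    rw [hww', heval v, hzero v hv, mul_zero]
  have hF0 : F = 0 := mv_grid_zero k F W hdeg hvan
  intro θ
  have := heval θ
  rw [hF0, map_zero] at this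
  exact ((mul_eq_zero.mp this.symm).resolve_left (hprodne θ))
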